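/- Let (X,ω) be a symplectic manifold with two almost complex structures J_0, J_t both compatible with ω. Then the complexified tangent space at every point splits as a direct sum TX_ℂ = T^{(1,0)}X_0 ⊕ T^{(0,1)}X_t, where T^{(1,0)}X_0 is the +i eigenspace of J_0 and T^{(0,1)}X_t is the −i eigenspace of J_t. -/
import Mathlib

open TensorProduct

namespace ComplexSplitAux

variable {V : Type*} [AddCommGroup V] [Module ℝ V]

/-- Real part map on the complexification. -/
noncomputable def reT (V : Type*) [AddCommGroup V] [Module ℝ V] :
    ℂ ⊗[ℝ] V →ₗ[ℝ] V :=
  TensorProduct.lift ((LinearMap.lsmul ℝ V).comp Complex.reLm)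

/-- Imaginary part map on the complexification. -/
noncomputable def imT (V : Type*) [AddCommGroup V] [Module ℝ V] :
    ℂ ⊗[ℝ] V →ₗ[ℝ] V :=
  TensorProduct.lift ((LinearMap.lsmul ℝ V).comp Complex.imLm)

@[simp] lemma reT_tmul (z : ℂ) (v : V) : reT V (z ⊗ₜ[ℝ] v) = z.re • v := rfl

@[simp] lemma imT_tmul (z : ℂ) (v : V) : imT V (z ⊗ₜ[ℝ] v) = z.im • v := rfl

lemma reT_imT_recover (w : ℂ ⊗[ℝ] V) :
    (1 : ℂ) ⊗ₜ[ℝ] (reT V w) + Complex.I ⊗ₜ[ℝ] (imT V w) = w := by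
  induction w using TensorProduct.induction_on with
  | zero => simp
  | tmul z v =>
      rw [reT_tmul, imT_tmul,
        show (1:ℂ) ⊗ₜ[ℝ] (z.re • v) = (z.re • (1:ℂ)) ⊗ₜ[ℝ] v from (smul_tmul _ _ _).symm,
        show Complex.I ⊗ₜ[ℝ] (z.im • v) = (z.im • Complex.I) ⊗ₜ[ℝ] v from
          (smul_tmul _ _ _).symm,
        ← add_tmul]
      congr 1
      apply Complex.ext <;> simp
  | add x y hx hy =>
      rw [map_add, map_add, tmul_add, tmul_add]
      nth_rewrite 3 [← hx]
      nth_rewrite 3 [← hy]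
      abel

lemma reT_baseChange (J : V →ₗ[ℝ] V) (w : ℂ ⊗[ℝ] V) :
    reT V (J.baseChange ℂ w) = J (reT V w) := by
  induction w using TensorProduct.induction_on with
  | zero => simp
  | tmul z v => simp
  | add x y hx hy => simp [hx, hy]

lemma imT_baseChange (J : V →ₗ[ℝ] V) (w : ℂ ⊗[ℝ] V) :
    imT V (J.baseChange ℂ w) = J (imT V w) := by
  induction w using TensorProduct.induction_on with
  | zero => simp
  | tmul z v => simp
  | add x y hx hy => simp [hx, hy]

lemma reT_I_smul (w : ℂ ⊗[ℝ] V) : reT V (Complex.I • w) = -(imT V w) := by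
  induction w using TensorProduct.induction_on with
  | zero => simp
  | tmul z v => rw [smul_tmul']; simp [neg_smul]
  | add x y hx hy => simp only [smul_add, map_add, hx, hy]; abel

lemma imT_I_smul (w : ℂ ⊗[ℝ] V) : imT V (Complex.I • w) = reT V w := by
  induction w using TensorProduct.induction_on with
  | zero => simp
  | tmul z v => rw [smul_tmul']; simp
  | add x y hx hy => simp [smul_add, hx, hy]

end ComplexSplitAux

open ComplexSplitAux

/-- If `J₀` and `J₁` are two complex structures on a symplectic vector space
`(V, ω)`, both compatible with `ω`, then the complexification `ℂ ⊗[ℝ] V`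
splits as the direct sum of the `+i` eigenspace of `J₀` and the `-i`
eigenspace of `J₁` (this is the splitting
`TX_ℂ = T^{(1,0)}X_0 ⊕ T^{(0,1)}X_t` at each point). -/
theorem complexified_splitting_two_compatible_structures
    {V : Type*} [AddCommGroup V] [Module ℝ V] [FiniteDimensional ℝ V]
    (ω : V →ₗ[ℝ] V →ₗ[ℝ] ℝ) (hskew : ∀ v : V, ω v v = 0)
    (hnondeg : ∀ v : V, v ≠ 0 → ∃ w : V, ω v w ≠ 0)
    (J0 J1 : V →ₗ[ℝ] V)
    (hJ0 : J0 ∘ₗ J0 = -LinearMap.id) (hJ1 : J1 ∘ₗ J1 = -LinearMap.id)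
    (hcompat0 : ∀ u v : V, ω (J0 u) (J0 v) = ω u v)
    (hcompat1 : ∀ u v : V, ω (J1 u) (J1 v) = ω u v)
    (hpos0 : ∀ v : V, v ≠ 0 → 0 < ω v (J0 v))
    (hpos1 : ∀ v : V, v ≠ 0 → 0 < ω v (J1 v)) :
    IsCompl (Module.End.eigenspace (J0.baseChange ℂ) Complex.I)
      (Module.End.eigenspace (J1.baseChange ℂ) (-Complex.I)) := by
  have hJ0sq : ∀ v : V, J0 (J0 v) = -v := by
    intro v
    have := congrArg (fun f => f v) hJ0
    simpa using this
  have hJ1sq : ∀ v : V, J1 (J1 v) = -v := by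
    intro v
    have := congrArg (fun f => f v) hJ1
    simpa using this
  constructor
  · -- disjoint
    rw [Submodule.disjoint_def]
    intro w hw0 hw1
    rw [Module.End.mem_eigenspace_iff] at hw0 hw1
    set a := reT V w with ha
    set b := imT V w with hb
    -- relations from eigenvector equations
    have e0a : J0 a = -b := by
      rw [ha, ← reT_baseChange, hw0, reT_I_smul]
    have e0b : J0 b = a := by
      rw [hb, ← imT_baseChange, hw0, imT_I_smul]
    have e1a : J1 a = b := by
      rw [ha, ← reT_baseChange, hw1, neg_smul, map_neg, reT_I_smul, neg_neg]
    have haz : a = 0 := by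
      by_contra hne
      have h0 := hpos0 a hne
      have h1 := hpos1 a hne
      rw [e0a] at h0
      rw [e1a] at h1
      simp only [map_neg] at h0
      linarith
    have hbz : b = 0 := by
      have h := congrArg J0 e0b
      rw [hJ0sq, haz, map_zero] at h
      exact neg_eq_zero.mp h
    have := reT_imT_recover (V := V) w
    rw [← ha, ← hb, haz, hbz] at this
    simp at this
    exact this.symm
  · -- codisjoint
    rw [codisjoint_iff_le_sup]
    -- J0 + J1 is injective hence surjective
    have hinj : Function.Injective (J0 + J1) := by
      rw [← LinearMap.ker_eq_bot, LinearMap.ker_eq_bot']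
      intro x hx
      by_contra hne
      have h0 := hpos0 x hne
      have h1 := hpos1 x hne
      have h' : J0 x + J1 x = 0 := by simpa [LinearMap.add_apply] using hx
      have hxx : J1 x = -J0 x := eq_neg_of_add_eq_zero_right h'
      rw [hxx, map_neg] at h1
      linarith
    have hsurj : Function.Surjective (J0 + J1) :=
      (LinearMap.injective_iff_surjective).mp hinj
    intro w _
    -- reduce to elements 1 ⊗ v
    have key : ∀ v : V, (1 : ℂ) ⊗ₜ[ℝ] v ∈
        Module.End.eigenspace (J0.baseChange ℂ) Complex.I ⊔
        Module.End.eigenspace (J1.baseChange ℂ) (-Complex.I) := by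
      intro v
      obtain ⟨x, hx⟩ := hsurj (J1 v)
      refine Submodule.mem_sup.mpr
        ⟨(1:ℂ) ⊗ₜ[ℝ] x - Complex.I ⊗ₜ[ℝ] (J0 x), ?_,
         (1:ℂ) ⊗ₜ[ℝ] (v - x) + Complex.I ⊗ₜ[ℝ] (J1 (v - x)), ?_, ?_⟩
      · rw [Module.End.mem_eigenspace_iff]
        simp only [map_sub, LinearMap.baseChange_tmul, hJ0sq, smul_sub,
          smul_tmul', smul_eq_mul, mul_one, Complex.I_mul_I, tmul_neg]
        ring_nf
        simp only [neg_tmul]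
        abel
      · rw [Module.End.mem_eigenspace_iff]
        simp only [map_add, LinearMap.baseChange_tmul, hJ1sq, smul_add,
          smul_tmul', smul_eq_mul, neg_mul, mul_one, Complex.I_mul_I, tmul_neg,
          neg_neg]
        simp only [neg_tmul, neg_neg]
        abel
      · have hsum : J0 x + J1 x = J1 v := by
          simpa [LinearMap.add_apply] using hx
        have h2 : J1 (v - x) = J0 x := by
          rw [map_sub, ← hsum]; abel
        rw [h2]
        rw [show (1:ℂ) ⊗ₜ[ℝ] x - Complex.I ⊗ₜ[ℝ] (J0 x)
            + ((1:ℂ) ⊗ₜ[ℝ] (v - x) + Complex.I ⊗ₜ[ℝ] (J0 x))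
            = (1:ℂ) ⊗ₜ[ℝ] x + (1:ℂ) ⊗ₜ[ℝ] (v - x) by abel]
        rw [← tmul_add]
        congr 1
        abel
    have hrec := reT_imT_recover (V := V) w
    rw [← hrec]
    refine add_mem (key _) ?_
    rw [show Complex.I ⊗ₜ[ℝ] (imT V w) = Complex.I • ((1:ℂ) ⊗ₜ[ℝ] (imT V w)) by
      rw [smul_tmul', smul_eq_mul, mul_one]]
    exact Submodule.smul_mem _ _ (key _)
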